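/- Let p be a prime number, let k be a commutative ring of characteristic p, let n ≥ 1, and let M be an n×n matrix with entries in k⟦X⟧. Define the additive map D : (Fin n → k⟦X⟧) → (Fin n → k⟦X⟧) by (D v)_i = X · (v_i)′ + (M · v)_i, where (v_i)′ is the formal derivative and M · v is matrix–vector multiplication. Then there exists an n×n matrix Ψ with entries in k⟦X⟧ such that (D^[p])(v) − D(v) = Ψ · v for every v (i.e. the map D^[p] − D is k⟦X⟧-linear, given by multiplication by Ψ), and the constant-term matrix Ψ(0) equals M(0)^p − M(0), where M(0) and Ψ(0) denote the matrices obtained by applying the constant-coefficient map entrywise. -/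

import Mathlib

/-- In a ring `R` with `p • x = 0` for all `x` (`p` prime), if `d, c 0, c 1, ...` satisfy
`[d, c j] = c (j+1)` and `c p = c 1`, then `d^p - d` commutes with `c 0`. -/
theorem stmt_9_auxcomm {R : Type*} [Ring R] {p : ℕ} (hp : p.Prime)
    (htors : ∀ x : R, p • x = 0) (d : R) (c : ℕ → R)
    (hc : ∀ j, d * c j - c j * d = c (j + 1)) (hcp : c p = c 1) :
    (d ^ p - d) * c 0 = c 0 * (d ^ p - d) := by
  set L : AddMonoid.End R := AddMonoidHom.mulLeft d with hL
  set Rm : AddMonoid.End R := AddMonoidHom.mulRight d with hR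
  have hLR : Commute L Rm := by
    refine AddMonoidHom.ext fun x => ?_
    show d * (x * d) = (d * x) * d
    rw [mul_assoc]
  have hLpow : ∀ j, (L ^ j) = AddMonoidHom.mulLeft (d ^ j) := by
    intro j
    induction j with
    | zero =>
        rw [pow_zero]
        refine AddMonoidHom.ext fun x => ?_
        show x = 1 * x
        rw [one_mul]
    | succ j ih =>
        rw [pow_succ']
        refine AddMonoidHom.ext fun x => ?_
        show (L ^ j) (L x) = _
        rw [show (L ^ j) (L x) = d ^ j * L x from DFunLike.congr_fun ih (L x)]
        show d ^ j * (d * x) = d * d ^ j * x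
        rw [← mul_assoc, ← pow_succ, ← pow_succ']
  have hRpow : ∀ j, (Rm ^ j) = AddMonoidHom.mulRight (d ^ j) := by
    intro j
    induction j with
    | zero =>
        rw [pow_zero]
        refine AddMonoidHom.ext fun x => ?_
        show x = x * 1
        rw [mul_one]
    | succ j ih =>
        rw [pow_succ']
        refine AddMonoidHom.ext fun x => ?_
        show (Rm ^ j) (Rm x) = _
        rw [show (Rm ^ j) (Rm x) = Rm x * d ^ j from DFunLike.congr_fun ih (Rm x)]
        show (x * d) * d ^ j = x * (d * d ^ j)
        rw [mul_assoc]
  have htorsF : ∀ x : AddMonoid.End R, p • x = 0 := by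
    intro x
    refine AddMonoid.End.ext R fun e => ?_
    have h1 : (p • x) e = p • (x e) := rfl
    rw [h1, htors]
    rfl
  have hcastF : ((p : ℕ) : AddMonoid.End R) = 0 := by
    have h1 := htorsF 1
    rwa [nsmul_eq_mul, mul_one] at h1
  obtain ⟨r, hr⟩ := (hLR.neg_right).exists_add_pow_prime_eq hp
  have hnegRp : (-Rm) ^ p = -(Rm ^ p) := by
    rcases hp.eq_two_or_odd' with h2 | hodd
    · subst h2
      have h1 : (-Rm) ^ 2 = Rm ^ 2 := by
        rw [sq, sq]
        refine AddMonoidHom.ext fun x => ?_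
        show -(-(x * d) * d) = (x * d) * d
        rw [neg_mul, neg_neg]
      have h3 := htorsF (Rm ^ 2)
      rw [two_nsmul] at h3
      have h2' : -(Rm ^ 2) = Rm ^ 2 := neg_eq_of_add_eq_zero_left h3
      rw [h1]
      exact h2'.symm
    · exact hodd.neg_pow Rm
  have hadp : (L - Rm) ^ p = L ^ p - Rm ^ p := by
    rw [sub_eq_add_neg, hr, hnegRp, hcastF, zero_mul, zero_mul, zero_mul, add_zero, ← sub_eq_add_neg]
  have hadapply : ∀ x : R, (L - Rm) x = d * x - x * d := fun _ => rfl
  have hadc : ∀ j, ((L - Rm) ^ j) (c 0) = c j := by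
    intro j
    induction j with
    | zero => rfl
    | succ j ih =>
        rw [pow_succ']
        show (L - Rm) (((L - Rm) ^ j) (c 0)) = _
        rw [ih, hadapply, hc]
  have h1 : d ^ p * c 0 - c 0 * d ^ p = c 1 := by
    have h := hadc p
    rw [hadp] at h
    calc d ^ p * c 0 - c 0 * d ^ p
        = (AddMonoidHom.mulLeft (d ^ p) - AddMonoidHom.mulRight (d ^ p) :
            AddMonoid.End R) (c 0) := rfl
      _ = c p := by rw [← hLpow, ← hRpow]; exact h
      _ = c 1 := hcp
  have h2 : d * c 0 - c 0 * d = c 1 := hc 0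
  have h3 : d ^ p * c 0 - c 0 * d ^ p = d * c 0 - c 0 * d := by rw [h1, h2]
  have h4 : d ^ p * c 0 - d * c 0 = c 0 * d ^ p - c 0 * d := by
    rw [sub_eq_sub_iff_sub_eq_sub]
    exact h3
  rw [sub_mul, mul_sub]
  exact h4

set_option maxHeartbeats 1000000
set_option synthInstance.maxHeartbeats 400000

/-- Local form of the residue of the `p`-curvature: for `D = x∂ₓ + M` acting on
`(k⟦X⟧)^n`, the map `D^[p] - D` is `k⟦X⟧`-linear, given by a matrix `Ψ` whose
constant-term matrix is `M(0)^p - M(0)`. -/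
theorem stmt_9 (p : ℕ) (hp : p.Prime) (k : Type*) [CommRing k] [CharP k p]
    (n : ℕ) (hn : 1 ≤ n) (M : Matrix (Fin n) (Fin n) (PowerSeries k))
    (D : (Fin n → PowerSeries k) → (Fin n → PowerSeries k))
    (hD : ∀ v i, D v i = PowerSeries.X * PowerSeries.derivativeFun (v i) + M.mulVec v i) :
    ∃ Ψ : Matrix (Fin n) (Fin n) (PowerSeries k),
      (∀ v, D^[p] v - D v = Ψ.mulVec v) ∧
      Ψ.map (PowerSeries.constantCoeff (R := k))
        = (M.map (PowerSeries.constantCoeff (R := k))) ^ p - M.map (PowerSeries.constantCoeff (R := k)) := by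
  haveI : Fact p.Prime := ⟨hp⟩
  classical
  set θ : PowerSeries k → PowerSeries k := fun f => PowerSeries.X * f.derivativeFun with hθ
  have coeff_theta : ∀ (f : PowerSeries k) (m : ℕ),
      PowerSeries.coeff (R := k) m (θ f) = (m : k) * PowerSeries.coeff (R := k) m f := by
    intro f m
    cases m with
    | zero => simp [hθ]
    | succ m =>
        rw [hθ]
        show PowerSeries.coeff (R := k) (m+1) (PowerSeries.X * f.derivativeFun) = _
        rw [PowerSeries.coeff_succ_X_mul, show f.derivativeFun = PowerSeries.derivative k f from rfl, PowerSeries.coeff_derivativeFun]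
        push_cast
        ring
  have theta_iter : ∀ (j : ℕ) (f : PowerSeries k) (m : ℕ),
      PowerSeries.coeff (R := k) m (θ^[j] f) = (m : k) ^ j * PowerSeries.coeff (R := k) m f := by
    intro j
    induction j with
    | zero => simp
    | succ j ih =>
        intro f m
        rw [Function.iterate_succ_apply', coeff_theta, ih, pow_succ]
        ring
  have fermat : ∀ m : ℕ, ((m : k)) ^ p = (m : k) := by
    intro m
    let φ : ZMod p →+* k := ZMod.castHom (dvd_refl p) k
    have h : (m : k) = φ (m : ZMod p) := by simp [φ]
    rw [h, ← map_pow, ZMod.pow_card]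
  have theta_p : ∀ f : PowerSeries k, θ^[p] f = θ f := by
    intro f
    ext m
    rw [theta_iter, coeff_theta, fermat]
  -- D is additive
  have hadd : ∀ u v, D (u + v) = D u + D v := by
    intro u v
    funext i
    simp only [hD, Pi.add_apply, PowerSeries.derivativeFun_add, Matrix.mulVec_add]
    ring
  set Dm : AddMonoid.End (Fin n → PowerSeries k) := AddMonoidHom.mk' D hadd with hDm
  set μ : PowerSeries k → AddMonoid.End (Fin n → PowerSeries k) :=
    fun f => AddMonoidHom.mk' (fun v => f • v) (fun a b => smul_add f a b) with hμ
  have hDmul : ∀ (f : PowerSeries k) (v : Fin n → PowerSeries k),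
      D (f • v) = θ f • v + f • D v := by
    intro f v
    funext i
    simp only [hD, Pi.add_apply, Pi.smul_apply, smul_eq_mul, Matrix.mulVec_smul]
    rw [PowerSeries.derivativeFun_mul]
    simp only [smul_eq_mul, hθ]
    ring
  have hcommE : ∀ f : PowerSeries k, Dm * μ f - μ f * Dm = μ (θ f) := by
    intro f
    refine AddMonoidHom.ext fun v => ?_
    show D (f • v) - f • D v = θ f • v
    rw [hDmul]; abel
  -- torsion
  have htorsO : ∀ f : PowerSeries k, p • f = 0 := by
    intro f
    ext m
    rw [map_nsmul, nsmul_eq_mul, map_zero, CharP.cast_eq_zero]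
    ring
  have htorsV : ∀ v : Fin n → PowerSeries k, p • v = 0 := by
    intro v; funext i; exact htorsO (v i)
  have htorsE : ∀ x : AddMonoid.End (Fin n → PowerSeries k), p • x = 0 := by
    intro x; refine AddMonoidHom.ext fun v => ?_; exact htorsV (x v)
  have htorsF : ∀ x : AddMonoid.End (AddMonoid.End (Fin n → PowerSeries k)), p • x = 0 := by
    intro x; refine AddMonoid.End.ext _ fun e => ?_
    have h1 : (p • x) e = p • (x e) := rfl
    rw [h1, htorsE]; rfl
  have hmaincomm : ∀ f : PowerSeries k, (Dm ^ p - Dm) * μ f = μ f * (Dm ^ p - Dm) := by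
    intro f
    refine stmt_9_auxcomm hp htorsE Dm (fun j => μ (θ^[j] f)) ?_ ?_
    · intro j
      show Dm * μ (θ^[j] f) - μ (θ^[j] f) * Dm = μ (θ^[j+1] f)
      rw [hcommE (θ^[j] f), Function.iterate_succ_apply']
    · show μ (θ^[p] f) = μ (θ^[1] f)
      rw [theta_p, Function.iterate_one]
  have hiter : ∀ (j : ℕ) (v : Fin n → PowerSeries k), (Dm ^ j) v = D^[j] v := by
    intro j
    induction j with
    | zero => intro v; rfl
    | succ j ih =>
        intro v
        rw [pow_succ]
        show (Dm ^ j) (Dm v) = _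
        rw [Function.iterate_succ_apply]
        exact ih (D v)
  set Ψ' : AddMonoid.End (Fin n → PowerSeries k) := Dm ^ p - Dm with hΨ'
  have hΨ'apply : ∀ v, Ψ' v = D^[p] v - D v := by
    intro v
    show (Dm ^ p) v - Dm v = _
    rw [hiter]
    rfl
  have hΨ'smul : ∀ (f : PowerSeries k) (v : Fin n → PowerSeries k),
      Ψ' (f • v) = f • Ψ' v := by
    intro f v
    exact congrArg (fun T : AddMonoid.End (Fin n → PowerSeries k) => T v) (hmaincomm f)
  set Ψ : Matrix (Fin n) (Fin n) (PowerSeries k) :=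
    Matrix.of fun i j => Ψ' (Pi.single j 1) i with hΨdef
  have hmulVec : ∀ v : Fin n → PowerSeries k, Ψ.mulVec v = Ψ' v := by
    intro v
    have h6 : ∀ j : Fin n, (v j) • (Pi.single j (1:PowerSeries k) : Fin n → PowerSeries k)
        = Pi.single j (v j) := by
      intro j
      funext l
      have : ((v j) • (Pi.single j (1:PowerSeries k) : Fin n → PowerSeries k)) l
          = v j * (Pi.single j (1:PowerSeries k) : Fin n → PowerSeries k) l := rfl
      rw [this, Pi.single_apply, Pi.single_apply]
      split_ifs <;> simp
    have hv : ∑ j, (v j) • (Pi.single j (1:PowerSeries k) : Fin n → PowerSeries k) = v := by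
      rw [Finset.sum_congr rfl fun j _ => h6 j, Finset.univ_sum_single]
    funext i
    conv_rhs => rw [← hv]
    rw [map_sum]
    have h5 : (∑ j, Ψ' ((v j) • (Pi.single j (1:PowerSeries k) : Fin n → PowerSeries k))) i
        = ∑ j, (v j) * Ψ' ((Pi.single j (1:PowerSeries k) : Fin n → PowerSeries k)) i := by
      rw [Finset.sum_apply]
      refine Finset.sum_congr rfl fun j _ => ?_
      rw [hΨ'smul]
      rfl
    rw [h5]
    simp only [Matrix.mulVec, dotProduct, hΨdef, Matrix.of_apply]
    exact Finset.sum_congr rfl fun j _ => mul_comm _ _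
  refine ⟨Ψ, fun v => by rw [hmulVec, hΨ'apply], ?_⟩
  have hπD : ∀ v (i : Fin n), PowerSeries.constantCoeff (R := k) (D v i)
      = ((M.map (PowerSeries.constantCoeff (R := k))).mulVec
          (fun l => PowerSeries.constantCoeff (R := k) (v l))) i := by
    intro v i
    rw [hD, map_add, map_mul, PowerSeries.constantCoeff_X, zero_mul, zero_add]
    exact RingHom.map_mulVec (PowerSeries.constantCoeff (R := k)) M v i
  have hπiter : ∀ (j : ℕ) (v : Fin n → PowerSeries k),
      (fun i => PowerSeries.constantCoeff (R := k) (D^[j] v i))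
        = ((M.map (PowerSeries.constantCoeff (R := k))) ^ j).mulVec
            (fun l => PowerSeries.constantCoeff (R := k) (v l)) := by
    intro j
    induction j with
    | zero => intro v; rw [pow_zero, Matrix.one_mulVec]; rfl
    | succ j ih =>
        intro v
        rw [Function.iterate_succ_apply]
        rw [ih (D v)]
        have : (fun l => PowerSeries.constantCoeff (R := k) (D v l))
            = (M.map (PowerSeries.constantCoeff (R := k))).mulVec
                (fun l => PowerSeries.constantCoeff (R := k) (v l)) := by
          funext l; exact hπD v l
        rw [this, Matrix.mulVec_mulVec, ← pow_succ]
  ext i j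
  have he : (fun l => PowerSeries.constantCoeff (R := k) ((Pi.single j (1:PowerSeries k) : Fin n → PowerSeries k) l))
      = Pi.single j (1:k) := by
    funext l
    rcases eq_or_ne l j with h | h
    · subst h; simp
    · simp [Pi.single_eq_of_ne h]
  have key : PowerSeries.constantCoeff (R := k) (Ψ' (Pi.single j (1:PowerSeries k) : Fin n → PowerSeries k) i)
      = (((M.map (PowerSeries.constantCoeff (R := k))) ^ p
          - M.map (PowerSeries.constantCoeff (R := k))).mulVec (Pi.single j (1:k))) i := by
    rw [hΨ'apply]
    show PowerSeries.constantCoeff (R := k)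
        (D^[p] (Pi.single j 1) i - D (Pi.single j 1) i) = _
    rw [map_sub]
    have h1 := congrFun (hπiter p (Pi.single j (1:PowerSeries k) : Fin n → PowerSeries k)) i
    have h2 := hπD (Pi.single j (1:PowerSeries k) : Fin n → PowerSeries k) i
    rw [h1, h2, he, Matrix.sub_mulVec]
    rfl
  show PowerSeries.constantCoeff (R := k) (Ψ i j) = _
  have hΨij : Ψ i j = Ψ' (Pi.single j 1) i := rfl
  rw [hΨij, key, Matrix.mulVec_single]
  exact mul_one _
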